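/- arXiv:1904.05848 — 3 statements merged into one kernel-verified Lean document; each statement's English description precedes it below -/
import Mathlib

section
/- Assume Φ satisfies ESC (constant α̲), UCC (constant θ), BDP (constant K, together with its geometric consequence that φ_ω^n(B(x,r)) ⊇ B(φ_ω^n(x), K^{-1}‖Dφ_ω^n‖r) for every ball B(x,r) ⊆ X), and NEQ with constant ε > 0, and that the centers x^{(n)} are chosen in J_n ∩ X_ε. Then there exists N ∈ ℕ such that for all n ≥ N and every ω ∈ I^n, the shrinking target B_ω is contained in φ_ω^n(X). -/
open Set Metric MeasureTheory Filter

noncomputable section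

/-- Points of Euclidean space `ℝ^d`. -/
abbrev Pt (d : ℕ) : Type := EuclideanSpace ℝ (Fin d)

/-- A nonautonomous conformal iterated function system on a compact convex set
`X ⊆ ℝ^d` with nonempty interior, contained in a bounded open connected set `V`.
`I n` is the (finite, nonempty) alphabet at level `n` (0-indexed version of `I^{(n+1)}`),
`φ n e` the corresponding injective conformal contraction, whose derivative at every
point of `V` is a similarity with (positive) scaling factor `D n e x`. -/
structure NCIFS (d : ℕ) (E : Type) [DecidableEq E] : Type where
  X : Set (Pt d)
  V : Set (Pt d)
  compactX : IsCompact X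
  convexX : Convex ℝ X
  intX : (interior X).Nonempty
  XsubV : X ⊆ V
  openV : IsOpen V
  bddV : Bornology.IsBounded V
  connV : IsConnected V
  I : ℕ → Finset E
  Ine : ∀ n, (I n).Nonempty
  φ : ℕ → E → Pt d → Pt d
  D : ℕ → E → Pt d → ℝ
  Dpos : ∀ n e, e ∈ I n → ∀ x ∈ V, 0 < D n e x
  mapsV : ∀ n e, e ∈ I n → Set.MapsTo (φ n e) V V
  mapsX : ∀ n e, e ∈ I n → Set.MapsTo (φ n e) X X
  injV : ∀ n e, e ∈ I n → Set.InjOn (φ n e) V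
  conformal : ∀ n e, e ∈ I n → ∀ x ∈ V,
    ∃ A : Pt d →L[ℝ] Pt d, HasFDerivAt (φ n e) A x ∧ ∀ v, ‖A v‖ = D n e x * ‖v‖
  contractX : ∀ n e, e ∈ I n → ∀ x ∈ X, D n e x < 1

/-- Extension of a finite word to an infinite sequence (values beyond the word
are an arbitrary fixed element; they are never used). -/
def wext {E : Type} [Nonempty E] {q : ℕ} (ω : Fin q → E) : ℕ → E :=
  fun j => if h : j < q then ω ⟨j, h⟩ else Classical.arbitrary E

/-- Concatenation `ωξ` of a finite word `ω` of length `n` with an infinite tail `ξ`. -/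
def wcat {E : Type} {n : ℕ} (ω : Fin n → E) (ξ : ℕ → E) : ℕ → E :=
  fun j => if h : j < n then ω ⟨j, h⟩ else ξ (j - n)

namespace NCIFS

variable {d : ℕ} {E : Type} [DecidableEq E]

/-- The finite words occupying levels `m, m+1, …, m+q-1`. -/
def words (S : NCIFS d E) (m q : ℕ) : Finset (Fin q → E) :=
  Fintype.piFinset fun k => S.I (m + (k : ℕ))

/-- The composition `φ_{ξ 0}^{(m)} ∘ φ_{ξ 1}^{(m+1)} ∘ ⋯ ∘ φ_{ξ (q-1)}^{(m+q-1)}`. -/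
def comp (S : NCIFS d E) : ℕ → ℕ → (ℕ → E) → Pt d → Pt d
  | _, 0, _ => id
  | m, q + 1, ξ => S.φ m (ξ 0) ∘ S.comp (m + 1) q (fun j => ξ (j + 1))

/-- The scaling factor `|Dφ_ξ^{(m,…,m+q-1)}(x)|` of the composition, via the chain rule. -/
def Dw (S : NCIFS d E) : ℕ → ℕ → (ℕ → E) → Pt d → ℝ
  | _, 0, _, _ => 1
  | m, q + 1, ξ, x =>
      S.D m (ξ 0) (S.comp (m + 1) q (fun j => ξ (j + 1)) x) *
        S.Dw (m + 1) q (fun j => ξ (j + 1)) x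

/-- `‖Dφ_ξ‖ = sup_{x ∈ X} |Dφ_ξ(x)|`. -/
def normDw (S : NCIFS d E) (m q : ℕ) (ξ : ℕ → E) : ℝ :=
  sSup {r | ∃ x ∈ S.X, r = S.Dw m q ξ x}

/-- `κ̲_{(n)}`: minimum over `j ∈ I^{(n)}` and `x ∈ X` of `|Dφ_j^{(n)}(x)|`. -/
def kminLv (S : NCIFS d E) (n : ℕ) : ℝ :=
  sInf {r | ∃ e ∈ S.I n, ∃ x ∈ S.X, r = S.D n e x}

/-- `κ̄_{(n)}`: maximum over `j ∈ I^{(n)}` and `x ∈ X` of `|Dφ_j^{(n)}(x)|`. -/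
def kmaxLv (S : NCIFS d E) (n : ℕ) : ℝ :=
  sSup {r | ∃ e ∈ S.I n, ∃ x ∈ S.X, r = S.D n e x}

/-- `κ̲_n`: minimum over words `ω ∈ I^n` and `x ∈ X` of `|Dφ_ω^n(x)|`. -/
def kmin [Nonempty E] (S : NCIFS d E) (n : ℕ) : ℝ :=
  sInf {r | ∃ ω ∈ S.words 0 n, ∃ x ∈ S.X, r = S.Dw 0 n (wext ω) x}

/-- `κ̄_n`: maximum over words `ω ∈ I^n` and `x ∈ X` of `|Dφ_ω^n(x)|`. -/
def kmax [Nonempty E] (S : NCIFS d E) (n : ℕ) : ℝ :=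
  sSup {r | ∃ ω ∈ S.words 0 n, ∃ x ∈ S.X, r = S.Dw 0 n (wext ω) x}

/-- The partition function `Z_n(t) = Σ_{ω ∈ I^n} ‖Dφ_ω^n‖^t`. -/
def Z [Nonempty E] (S : NCIFS d E) (n : ℕ) (t : ℝ) : ℝ :=
  ∑ ω ∈ S.words 0 n, (S.normDw 0 n (wext ω)) ^ t

/-- `‖Dφ_e^{(n)}‖`. -/
def normLv (S : NCIFS d E) (n : ℕ) (e : E) : ℝ :=
  sSup {r | ∃ x ∈ S.X, r = S.D n e x}

/-- `ρ_n = max_{a,b ∈ I^{(n)}} ‖Dφ_a^{(n)}‖ / ‖Dφ_b^{(n)}‖`. -/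
def ρ (S : NCIFS d E) (n : ℕ) : ℝ :=
  sSup {r | ∃ a ∈ S.I n, ∃ b ∈ S.I n, r = S.normLv n a / S.normLv n b}

/-- `min_{a ∈ I^{(n)}} ‖Dφ_a^{(n)}‖`. -/
def minNormLv (S : NCIFS d E) (n : ℕ) : ℝ :=
  sInf {r | ∃ e ∈ S.I n, r = S.normLv n e}

/-- The limit set `J = ⋂_{n ≥ 1} ⋃_{ω ∈ I^n} φ_ω^n(X)`. -/
def limitSet [Nonempty E] (S : NCIFS d E) : Set (Pt d) :=
  ⋂ n ∈ Set.Ici 1, ⋃ ω ∈ S.words 0 n, S.comp 0 n (wext ω) '' S.X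

/-- `J_n = π_n(I^{(n+1,∞)})`: points lying in the nested intersection
`⋂_k φ_ξ^{(n,…,n+k-1)}(X)` for some admissible tail `ξ`. -/
def Jlv (S : NCIFS d E) (n : ℕ) : Set (Pt d) :=
  {x | ∃ ξ : ℕ → E, (∀ j, ξ j ∈ S.I (n + j)) ∧ ∀ k, x ∈ S.comp n k ξ '' S.X}

/-- `X_ε = X \ B(ℝ^d \ X, ε)`. -/
def Xeps (S : NCIFS d E) (ε : ℝ) : Set (Pt d) :=
  S.X \ ⋃ y ∈ S.Xᶜ, Metric.ball y ε

/-- Open set condition. -/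
def OSC (S : NCIFS d E) : Prop :=
  ∀ n, ∀ i ∈ S.I n, ∀ j ∈ S.I n, i ≠ j →
    S.φ n i '' interior S.X ∩ S.φ n j '' interior S.X = ∅

/-- Uniformly contracting condition with constant `θ`. -/
def UCC (S : NCIFS d E) (θ : ℝ) : Prop :=
  0 < θ ∧ ∀ n, S.kmaxLv n ≤ Real.exp (-θ)

/-- Bounded distortion property with constant `K`. -/
def BDP [Nonempty E] (S : NCIFS d E) (K : ℝ) : Prop :=
  1 ≤ K ∧ ∀ n, ∀ ω ∈ S.words 0 n, ∀ x ∈ S.X, ∀ y ∈ S.X,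
    S.Dw 0 n (wext ω) x ≤ K * S.Dw 0 n (wext ω) y

/-- Non-empty quasi middle condition with constant `ε`. -/
def NEQ (S : NCIFS d E) (ε : ℝ) : Prop :=
  0 < ε ∧ ∀ n, (S.Jlv n ∩ S.Xeps ε).Nonempty

end NCIFS

/-- The (topological) support of a measure: points all of whose balls have positive measure. -/
def msupp {d : ℕ} (μ : Measure (Pt d)) : Set (Pt d) :=
  {x | ∀ r : ℝ, 0 < r → 0 < μ (Metric.ball x r)}

/-- `μ` is `h`-Ahlfors regular with constant `C`. -/
def Ahlfors {d : ℕ} (μ : Measure (Pt d)) (h C : ℝ) : Prop :=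
  1 ≤ C ∧ ∀ x ∈ msupp μ, ∀ r : ℝ, 0 < r → r ≤ 1 →
    ENNReal.ofReal (C⁻¹ * r ^ h) ≤ μ (Metric.ball x r) ∧
      μ (Metric.ball x r) ≤ ENNReal.ofReal (C * r ^ h)

/-- Shrinking-target data for a nonautonomous conformal IFS: the functions `β_n`
(positive on admissible tails), fixed admissible tails `ξ^{(n)}` and centers `x^{(n)} ∈ X`. -/
structure STData {d : ℕ} {E : Type} [DecidableEq E] (S : NCIFS d E) : Type where
  β : ℕ → (ℕ → E) → ℝ
  βpos : ∀ n ξ, (∀ j, ξ j ∈ S.I (n + j)) → 0 < β n ξ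
  ξt : ℕ → ℕ → E
  ξtmem : ∀ n j, ξt n j ∈ S.I (n + j)
  xc : ℕ → Pt d
  xcX : ∀ n, xc n ∈ S.X

namespace STData

variable {d : ℕ} {E : Type} [DecidableEq E] {S : NCIFS d E}

/-- The Birkhoff-type sum `S_nβ(ξ) = Σ_{k<n} β_k(σ^k ξ)`. -/
def Snβ (T : STData S) (n : ℕ) (ξ : ℕ → E) : ℝ :=
  ∑ k ∈ Finset.range n, T.β k (fun j => ξ (k + j))

/-- The radius `e^{-S_nβ(ωξ^{(n)})}` of the shrinking target `B_ω`. -/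
def radius (T : STData S) {n : ℕ} (ω : Fin n → E) : ℝ :=
  Real.exp (-(T.Snβ n (wcat ω (T.ξt n))))

/-- The shrinking target `B_ω = B(φ_ω^n(x^{(n)}), e^{-S_nβ(ωξ^{(n)})})`. -/
def tball [Nonempty E] (T : STData S) (n : ℕ) (ω : Fin n → E) : Set (Pt d) :=
  Metric.ball (S.comp 0 n (wext ω) (T.xc n)) (T.radius ω)

/-- The shrinking-target set `𝒟 = ⋂_{N≥1} ⋃_{n≥N} ⋃_{ω ∈ I^n} B_ω`. -/
def target [Nonempty E] (T : STData S) : Set (Pt d) :=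
  ⋂ N ∈ Set.Ici 1, ⋃ n ∈ Set.Ici N, ⋃ ω ∈ S.words 0 n, T.tball n ω

/-- The upper pressure `P̄_β(t)`. -/
def upperP (T : STData S) (t : ℝ) : ℝ :=
  Filter.limsup (fun n : ℕ =>
    (1 / (n : ℝ)) *
      Real.log (∑ ω ∈ S.words 0 n, Real.exp (-t * T.Snβ n (wcat ω (T.ξt n)))))
    Filter.atTop

/-- The lower pressure `P̲_β(t)`. -/
def lowerP (T : STData S) (t : ℝ) : ℝ :=
  Filter.liminf (fun n : ℕ =>
    (1 / (n : ℝ)) *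
      Real.log (∑ ω ∈ S.words 0 n, Real.exp (-t * T.Snβ n (wcat ω (T.ξt n)))))
    Filter.atTop

/-- The Bowen parameter `b = inf {t ≥ 0 : P̄_β(t) < 0}`. -/
def bowen (T : STData S) : ℝ := sInf {t : ℝ | 0 ≤ t ∧ T.upperP t < 0}

/-- `β` is tame: the upper pressure is strictly decreasing. -/
def tame (T : STData S) : Prop := StrictAntiOn T.upperP (Set.Ici 0)

/-- Exponentially shrinking condition with constants `al ≤ au`. -/
def ESC (T : STData S) (al au : ℝ) : Prop :=
  0 < al ∧ al ≤ au ∧ ∀ k, ∀ ξ : ℕ → E, (∀ j, ξ j ∈ S.I (k + j)) →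
    al ≤ T.β k ξ + Real.log (S.kminLv k) ∧ T.β k ξ + Real.log (S.kmaxLv k) ≤ au

/-- Linear variation condition. -/
def LVC (T : STData S) : Prop :=
  Filter.Tendsto (fun n : ℕ =>
    (1 / (n : ℝ)) *
      (sSup {r | ∃ ξ : ℕ → E, (∀ j, ξ j ∈ S.I j) ∧ r = T.Snβ n ξ} -
        sInf {r | ∃ ξ : ℕ → E, (∀ j, ξ j ∈ S.I j) ∧ r = T.Snβ n ξ}))
    Filter.atTop (nhds 0)

end STData

namespace NCIFS

variable {d : ℕ} {E : Type} [DecidableEq E]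

lemma comp_congr' (S : NCIFS d E) : ∀ (q m : ℕ) (ξ ξ' : ℕ → E), (∀ j < q, ξ j = ξ' j) →
    ∀ x, S.comp m q ξ x = S.comp m q ξ' x := by
  intro q
  induction q with
  | zero => intro m ξ ξ' h x; rfl
  | succ q ih =>
    intro m ξ ξ' h x
    show S.φ m (ξ 0) (S.comp (m+1) q (fun j => ξ (j+1)) x) = _
    rw [h 0 (Nat.succ_pos q), ih (m+1) _ _ (fun j hj => h (j+1) (by omega)) x]
    rfl

lemma Dw_congr' (S : NCIFS d E) : ∀ (q m : ℕ) (ξ ξ' : ℕ → E), (∀ j < q, ξ j = ξ' j) →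
    ∀ x, S.Dw m q ξ x = S.Dw m q ξ' x := by
  intro q
  induction q with
  | zero => intro m ξ ξ' h x; rfl
  | succ q ih =>
    intro m ξ ξ' h x
    show S.D m (ξ 0) (S.comp (m+1) q (fun j => ξ (j+1)) x) * S.Dw (m+1) q (fun j => ξ (j+1)) x = _
    rw [h 0 (Nat.succ_pos q),
      S.comp_congr' q (m+1) _ (fun j => ξ' (j+1)) (fun j hj => h (j+1) (by omega)) x,
      ih (m+1) _ (fun j => ξ' (j+1)) (fun j hj => h (j+1) (by omega)) x]
    rfl

lemma comp_mem' (S : NCIFS d E) : ∀ (q m : ℕ) (ξ : ℕ → E), (∀ j < q, ξ j ∈ S.I (m + j)) →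
    ∀ x ∈ S.X, S.comp m q ξ x ∈ S.X := by
  intro q
  induction q with
  | zero => intro m ξ h x hx; exact hx
  | succ q ih =>
    intro m ξ h x hx
    show S.φ m (ξ 0) (S.comp (m+1) q (fun j => ξ (j+1)) x) ∈ S.X
    exact S.mapsX m (ξ 0) (by simpa using h 0 (Nat.succ_pos q))
      (ih (m+1) _ (fun j hj => by have := h (j+1) (by omega); simpa [Nat.add_assoc, Nat.add_comm 1 j] using this) x hx)

lemma Dw_pos' (S : NCIFS d E) : ∀ (q m : ℕ) (ξ : ℕ → E), (∀ j < q, ξ j ∈ S.I (m + j)) →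
    ∀ x ∈ S.X, 0 < S.Dw m q ξ x := by
  intro q
  induction q with
  | zero => intro m ξ h x hx; exact one_pos
  | succ q ih =>
    intro m ξ h x hx
    have h' : ∀ j < q, (fun j => ξ (j+1)) j ∈ S.I (m + 1 + j) := by
      intro j hj; have := h (j+1) (by omega)
      simpa [Nat.add_assoc, Nat.add_comm 1 j] using this
    show 0 < S.D m (ξ 0) (S.comp (m+1) q (fun j => ξ (j+1)) x) * S.Dw (m+1) q (fun j => ξ (j+1)) x
    exact mul_pos
      (S.Dpos m (ξ 0) (by simpa using h 0 (Nat.succ_pos q)) _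
        (S.XsubV (S.comp_mem' q (m+1) _ h' x hx)))
      (ih (m+1) _ h' x hx)

lemma comp_succ_last (S : NCIFS d E) : ∀ (q m : ℕ) (ξ : ℕ → E) (x : Pt d),
    S.comp m (q+1) ξ x = S.comp m q ξ (S.φ (m+q) (ξ q) x) := by
  intro q
  induction q with
  | zero => intro m ξ x; rfl
  | succ q ih =>
    intro m ξ x
    show S.φ m (ξ 0) (S.comp (m+1) (q+1) (fun j => ξ (j+1)) x) = _
    rw [ih (m+1) (fun j => ξ (j+1)) x]
    show _ = S.φ m (ξ 0) (S.comp (m+1) q (fun j => ξ (j+1)) (S.φ (m+(q+1)) (ξ (q+1)) x))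
    have : m + 1 + q = m + (q+1) := by omega
    rw [this]

lemma Dw_succ_last (S : NCIFS d E) : ∀ (q m : ℕ) (ξ : ℕ → E) (x : Pt d),
    S.Dw m (q+1) ξ x = S.Dw m q ξ (S.φ (m+q) (ξ q) x) * S.D (m+q) (ξ q) x := by
  intro q
  induction q with
  | zero =>
    intro m ξ x
    show S.D m (ξ 0) (S.comp (m+1) 0 (fun j => ξ (j+1)) x) * S.Dw (m+1) 0 (fun j => ξ (j+1)) x = _
    show S.D m (ξ 0) x * 1 = 1 * S.D (m+0) (ξ 0) x
    ring_nf
  | succ q ih =>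
    intro m ξ x
    show S.D m (ξ 0) (S.comp (m+1) (q+1) (fun j => ξ (j+1)) x) *
        S.Dw (m+1) (q+1) (fun j => ξ (j+1)) x = _
    rw [ih (m+1) (fun j => ξ (j+1)) x, S.comp_succ_last q (m+1) (fun j => ξ (j+1)) x]
    show _ = S.D m (ξ 0)
        (S.comp (m+1) q (fun j => ξ (j+1)) (S.φ (m+(q+1)) (ξ (q+1)) x)) *
        S.Dw (m+1) q (fun j => ξ (j+1)) (S.φ (m+(q+1)) (ξ (q+1)) x) * S.D (m+(q+1)) (ξ (q+1)) x
    have h1 : m + 1 + q = m + (q+1) := by omega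
    rw [h1]
    ring

lemma Dnonneg (S : NCIFS d E) {k : ℕ} {e : E} (he : e ∈ S.I k) {x : Pt d} (hx : x ∈ S.X) :
    0 < S.D k e x := S.Dpos k e he x (S.XsubV hx)

/-- From the bounded distortion property for words, the derivative of a single level-`k`
map has oscillation bounded by `K^2` on `X`. -/
lemma level_pinch [Nonempty E] (S : NCIFS d E) {K : ℝ} (hBDP : S.BDP K) (k : ℕ) (e : E)
    (he : e ∈ S.I k) {x y : Pt d} (hx : x ∈ S.X) (hy : y ∈ S.X) :
    S.D k e x ≤ K ^ 2 * S.D k e y := by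
  classical
  have hK0 : (0 : ℝ) < K := zero_lt_one.trans_le hBDP.1
  let ζ : ℕ → E := fun j => (S.Ine j).choose
  have hζ : ∀ j, ζ j ∈ S.I j := fun j => (S.Ine j).choose_spec
  let ω : Fin (k+1) → E := fun i => if (i : ℕ) = k then e else ζ i
  have hω : ω ∈ S.words 0 (k+1) := by
    rw [NCIFS.words, Fintype.mem_piFinset]
    intro i
    simp only [ω]
    split
    · next h => simpa [h] using he
    · simpa using hζ i
  let ω' : Fin k → E := fun i => ζ i
  have hω' : ω' ∈ S.words 0 k := by
    rw [NCIFS.words, Fintype.mem_piFinset]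
    intro i
    simpa [ω'] using hζ i
  have hcongr : ∀ j < k, wext ω' j = wext ω j := by
    intro j hj
    simp only [wext, ω', ω, dif_pos hj, dif_pos (Nat.lt_succ_of_lt hj)]
    simp [Nat.ne_of_lt hj]
  have hwk : wext ω k = e := by simp [wext, ω]
  have hadm : ∀ j < k, wext ω j ∈ S.I (0 + j) := by
    intro j hj
    simp only [wext, dif_pos (Nat.lt_succ_of_lt hj), ω]
    simp only [Nat.ne_of_lt hj, if_false]
    simpa using hζ j
  have hsplit : ∀ z : Pt d, S.Dw 0 (k+1) (wext ω) z
      = S.Dw 0 k (wext ω) (S.φ k e z) * S.D k e z := by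
    intro z
    have := S.Dw_succ_last k 0 (wext ω) z
    simpa [hwk] using this
  have hφx : S.φ k e x ∈ S.X := S.mapsX k e he hx
  have hφy : S.φ k e y ∈ S.X := S.mapsX k e he hy
  have h1 : S.Dw 0 k (wext ω) (S.φ k e x) * S.D k e x
      ≤ K * (S.Dw 0 k (wext ω) (S.φ k e y) * S.D k e y) := by
    have := hBDP.2 (k+1) ω hω x hx y hy
    rwa [hsplit x, hsplit y] at this
  have h2 : S.Dw 0 k (wext ω) (S.φ k e y) ≤ K * S.Dw 0 k (wext ω) (S.φ k e x) := by
    have := hBDP.2 k ω' hω' (S.φ k e y) hφy (S.φ k e x) hφx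
    rwa [S.Dw_congr' k 0 (wext ω') (wext ω) hcongr (S.φ k e y),
      S.Dw_congr' k 0 (wext ω') (wext ω) hcongr (S.φ k e x)] at this
  have hPpos : 0 < S.Dw 0 k (wext ω) (S.φ k e x) := S.Dw_pos' k 0 (wext ω) hadm _ hφx
  have hDy : 0 < S.D k e y := S.Dnonneg he hy
  have h3 : S.Dw 0 k (wext ω) (S.φ k e y) * S.D k e y
      ≤ (K * S.Dw 0 k (wext ω) (S.φ k e x)) * S.D k e y :=
    mul_le_mul_of_nonneg_right h2 hDy.le
  have h4 : S.Dw 0 k (wext ω) (S.φ k e x) * S.D k e x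
      ≤ S.Dw 0 k (wext ω) (S.φ k e x) * (K ^ 2 * S.D k e y) := by
    calc S.Dw 0 k (wext ω) (S.φ k e x) * S.D k e x
        ≤ K * ((K * S.Dw 0 k (wext ω) (S.φ k e x)) * S.D k e y) :=
          h1.trans (mul_le_mul_of_nonneg_left h3 hK0.le)
      _ = S.Dw 0 k (wext ω) (S.φ k e x) * (K ^ 2 * S.D k e y) := by ring
  exact le_of_mul_le_mul_left h4 hPpos

lemma kminLv_mem_lb (S : NCIFS d E) (k : ℕ) :
    ∀ r ∈ {r | ∃ e ∈ S.I k, ∃ x ∈ S.X, r = S.D k e x}, 0 ≤ r := by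
  rintro r ⟨e, he, x, hx, rfl⟩
  exact (S.Dnonneg he hx).le

lemma kminLv_le (S : NCIFS d E) (k : ℕ) {e : E} (he : e ∈ S.I k) {x : Pt d}
    (hx : x ∈ S.X) : S.kminLv k ≤ S.D k e x :=
  csInf_le ⟨0, S.kminLv_mem_lb k⟩ ⟨e, he, x, hx, rfl⟩

lemma kminLv_pos [Nonempty E] (S : NCIFS d E) {K : ℝ} (hBDP : S.BDP K) (k : ℕ) :
    0 < S.kminLv k := by
  classical
  have hK0 : (0 : ℝ) < K := zero_lt_one.trans_le hBDP.1
  obtain ⟨x₀, hx₀⟩ := S.intX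
  have hx₀X : x₀ ∈ S.X := interior_subset hx₀
  have hne : ((S.I k).image fun e => S.D k e x₀).Nonempty :=
    (S.Ine k).image _
  set c : ℝ := ((S.I k).image fun e => S.D k e x₀).min' hne with hc
  obtain ⟨e₁, he₁, hce⟩ := Finset.mem_image.mp (((S.I k).image fun e => S.D k e x₀).min'_mem hne)
  have hcpos : 0 < c := by rw [hc, ← hce]; exact S.Dnonneg he₁ hx₀X
  have hlb : ∀ r ∈ {r | ∃ e ∈ S.I k, ∃ x ∈ S.X, r = S.D k e x}, (K ^ 2)⁻¹ * c ≤ r := by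
    rintro r ⟨e, he, x, hx, rfl⟩
    have hp : S.D k e x₀ ≤ K ^ 2 * S.D k e x := S.level_pinch hBDP k e he hx₀X hx
    have hcle : c ≤ S.D k e x₀ := Finset.min'_le _ _ (Finset.mem_image_of_mem _ he)
    have hK2 : (0 : ℝ) < K ^ 2 := by positivity
    rw [inv_mul_le_iff₀ hK2]
    linarith
  have hne' : {r | ∃ e ∈ S.I k, ∃ x ∈ S.X, r = S.D k e x}.Nonempty :=
    ⟨S.D k ((S.Ine k).choose) x₀, (S.Ine k).choose, (S.Ine k).choose_spec, x₀, hx₀X, rfl⟩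
  have : (K ^ 2)⁻¹ * c ≤ S.kminLv k := le_csInf hne' hlb
  have hpos : (0:ℝ) < (K ^ 2)⁻¹ * c := by positivity
  exact hpos.trans_le this

lemma prod_kminLv_le_Dw (S : NCIFS d E) : ∀ (q m : ℕ) (ξ : ℕ → E),
    (∀ j < q, ξ j ∈ S.I (m + j)) → ∀ x ∈ S.X, (∀ i, 0 ≤ S.kminLv i) →
    (∏ k ∈ Finset.range q, S.kminLv (m + k)) ≤ S.Dw m q ξ x := by
  intro q
  induction q with
  | zero => intro m ξ h x hx _; simp [NCIFS.Dw]
  | succ q ih =>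
    intro m ξ h x hx hnn
    have h' : ∀ j < q, (fun j => ξ (j+1)) j ∈ S.I (m + 1 + j) := by
      intro j hj; have := h (j+1) (by omega)
      simpa [Nat.add_assoc, Nat.add_comm 1 j] using this
    have hcm : S.comp (m+1) q (fun j => ξ (j+1)) x ∈ S.X := S.comp_mem' q (m+1) _ h' x hx
    have h1 : S.kminLv m ≤ S.D m (ξ 0) (S.comp (m+1) q (fun j => ξ (j+1)) x) :=
      S.kminLv_le m (by simpa using h 0 (Nat.succ_pos q)) hcm
    have h2 : (∏ k ∈ Finset.range q, S.kminLv (m + 1 + k)) ≤ S.Dw (m+1) q (fun j => ξ (j+1)) x :=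
      ih (m+1) _ h' x hx hnn
    have hprod : (∏ k ∈ Finset.range (q+1), S.kminLv (m + k))
        = S.kminLv m * ∏ k ∈ Finset.range q, S.kminLv (m + 1 + k) := by
      rw [Finset.prod_range_succ' (fun k => S.kminLv (m + k)) q]
      rw [mul_comm]
      congr 1
      exact Finset.prod_congr rfl fun k _ => by congr 1; omega
    rw [hprod]
    show S.kminLv m * ∏ k ∈ Finset.range q, S.kminLv (m + 1 + k)
      ≤ S.D m (ξ 0) (S.comp (m+1) q (fun j => ξ (j+1)) x) * S.Dw (m+1) q (fun j => ξ (j+1)) x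
    exact mul_le_mul h1 h2 (Finset.prod_nonneg fun k _ => hnn _) (S.Dnonneg (by simpa using h 0 (Nat.succ_pos q)) hcm).le

end NCIFS

/-- Under ESC, UCC, BDP (with its geometric ball-inclusion consequence)
and NEQ, with centers `x^{(n)} ∈ J_n ∩ X_ε`, for all sufficiently large `n` every
shrinking target `B_ω`, `ω ∈ I^n`, is contained in `φ_ω^n(X)`. -/
theorem targets_in_images {d : ℕ} {E : Type} [DecidableEq E] [Nonempty E]
    (hd : 1 ≤ d) (S : NCIFS d E) (T : STData S)
    (al au θ K ε : ℝ)
    (hESC : T.ESC al au) (hUCC : S.UCC θ) (hBDP : S.BDP K)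
    (hgeom : ∀ n, ∀ ω ∈ S.words 0 n, ∀ (x : Pt d) (r : ℝ), Metric.ball x r ⊆ S.X →
      Metric.ball (S.comp 0 n (wext ω) x) (K⁻¹ * S.normDw 0 n (wext ω) * r) ⊆
        S.comp 0 n (wext ω) '' Metric.ball x r)
    (hNEQ : S.NEQ ε)
    (hxc : ∀ n, T.xc n ∈ S.Jlv n ∩ S.Xeps ε) :
    ∃ N : ℕ, ∀ n, N ≤ n → ∀ ω ∈ S.words 0 n,
      T.tball n ω ⊆ S.comp 0 n (wext ω) '' S.X := by
  classical
  have hK1 : (1 : ℝ) ≤ K := hBDP.1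
  have hK0 : (0 : ℝ) < K := zero_lt_one.trans_le hK1
  have hal : 0 < al := hESC.1
  have hε : 0 < ε := hNEQ.1
  have hc : 0 < K⁻¹ * ε := mul_pos (inv_pos.2 hK0) hε
  -- choose N with exp(-(n·al)) < K⁻¹ε for n ≥ N
  have htend : Filter.Tendsto (fun n : ℕ => Real.exp (-((n : ℝ) * al))) atTop (nhds 0) := by
    apply Real.tendsto_exp_atBot.comp
    exact tendsto_neg_atTop_atBot.comp (tendsto_natCast_atTop_atTop.atTop_mul_const hal)
  obtain ⟨N, hN⟩ := Filter.eventually_atTop.mp (htend.eventually_lt_const hc)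
  refine ⟨N, ?_⟩
  intro n hn ω hω
  set x := T.xc n with hxdef
  have hx : x ∈ S.X := T.xcX n
  have hxeps : x ∈ S.Xeps ε := (hxc n).2
  -- the ball of radius ε around the center is inside X
  have hballX : Metric.ball x ε ⊆ S.X := by
    intro z hz
    by_contra hzX
    apply hxeps.2
    refine Set.mem_biUnion hzX ?_
    rw [Metric.mem_ball, dist_comm]
    exact hz
  have hωmem : ∀ j < n, wext ω j ∈ S.I (0 + j) := by
    intro j hj
    have := Fintype.mem_piFinset.mp hω ⟨j, hj⟩
    simpa [wext, dif_pos hj] using this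
  -- admissibility of the concatenated sequence
  set ξ : ℕ → E := wcat ω (T.ξt n) with hξdef
  have hξ : ∀ j, ξ j ∈ S.I j := by
    intro j
    by_cases h : j < n
    · have := Fintype.mem_piFinset.mp hω ⟨j, h⟩
      simpa [hξdef, wcat, dif_pos h] using this
    · have := T.ξtmem n (j - n)
      have hj : n + (j - n) = j := by omega
      rw [hj] at this
      simpa [hξdef, wcat, h] using this
  have hkpos : ∀ i, 0 < S.kminLv i := fun i => S.kminLv_pos hBDP i
  -- lower bound on the Birkhoff sum from ESC
  have hβk : ∀ k ∈ Finset.range n,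
      al - Real.log (S.kminLv k) ≤ T.β k (fun j => ξ (k + j)) := by
    intro k _
    have := (hESC.2.2 k (fun j => ξ (k + j)) (fun j => hξ (k + j))).1
    linarith
  have hsum : (n : ℝ) * al - ∑ k ∈ Finset.range n, Real.log (S.kminLv k) ≤ T.Snβ n ξ := by
    have h1 := Finset.sum_le_sum hβk
    have h2 : ∑ k ∈ Finset.range n, (al - Real.log (S.kminLv k))
        = (n : ℝ) * al - ∑ k ∈ Finset.range n, Real.log (S.kminLv k) := by
      rw [Finset.sum_sub_distrib, Finset.sum_const, Finset.card_range, nsmul_eq_mul]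
    rw [h2] at h1
    exact h1
  -- bound the radius
  have hrad : T.radius ω ≤ Real.exp (-((n : ℝ) * al)) * ∏ k ∈ Finset.range n, S.kminLv k := by
    have h1 : -(T.Snβ n ξ) ≤ (∑ k ∈ Finset.range n, Real.log (S.kminLv k)) - (n : ℝ) * al := by
      linarith
    have h2 : T.radius ω ≤ Real.exp ((∑ k ∈ Finset.range n, Real.log (S.kminLv k)) - (n : ℝ) * al) :=
      Real.exp_le_exp.mpr h1
    have h3 : Real.exp ((∑ k ∈ Finset.range n, Real.log (S.kminLv k)) - (n : ℝ) * al)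
        = Real.exp (-((n : ℝ) * al)) * ∏ k ∈ Finset.range n, S.kminLv k := by
      rw [Real.exp_sub, Real.exp_sum]
      have : ∏ k ∈ Finset.range n, Real.exp (Real.log (S.kminLv k))
          = ∏ k ∈ Finset.range n, S.kminLv k :=
        Finset.prod_congr rfl fun k _ => Real.exp_log (hkpos k)
      rw [this, div_eq_mul_inv, ← Real.exp_neg, mul_comm]
    rw [h3] at h2
    exact h2
  -- the product of level minima bounds Dw from below
  have hprodDw : (∏ k ∈ Finset.range n, S.kminLv k) ≤ S.Dw 0 n (wext ω) x := by
    have := S.prod_kminLv_le_Dw n 0 (wext ω) hωmem x hx (fun i => (hkpos i).le)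
    have heq : (∏ k ∈ Finset.range n, S.kminLv (0 + k)) = ∏ k ∈ Finset.range n, S.kminLv k :=
      Finset.prod_congr rfl fun k _ => by rw [Nat.zero_add]
    rwa [heq] at this
  -- Dw ≤ normDw
  have hbddA : BddAbove {r | ∃ y ∈ S.X, r = S.Dw 0 n (wext ω) y} := by
    refine ⟨K * S.Dw 0 n (wext ω) x, ?_⟩
    rintro r ⟨y, hy, rfl⟩
    exact hBDP.2 n ω hω y hy x hx
  have hDle : S.Dw 0 n (wext ω) x ≤ S.normDw 0 n (wext ω) :=
    le_csSup hbddA ⟨x, hx, rfl⟩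
  have hDwpos : 0 < S.Dw 0 n (wext ω) x := S.Dw_pos' n 0 (wext ω) hωmem x hx
  have hnormnn : 0 ≤ S.normDw 0 n (wext ω) := (hDwpos.trans_le hDle).le
  -- final radius bound
  have hexp : Real.exp (-((n : ℝ) * al)) ≤ K⁻¹ * ε := (hN n hn).le
  have hradle : T.radius ω ≤ K⁻¹ * S.normDw 0 n (wext ω) * ε := by
    calc T.radius ω ≤ Real.exp (-((n : ℝ) * al)) * ∏ k ∈ Finset.range n, S.kminLv k := hrad
      _ ≤ Real.exp (-((n : ℝ) * al)) * S.normDw 0 n (wext ω) := by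
          apply mul_le_mul_of_nonneg_left (hprodDw.trans hDle) (Real.exp_nonneg _)
      _ ≤ (K⁻¹ * ε) * S.normDw 0 n (wext ω) := mul_le_mul_of_nonneg_right hexp hnormnn
      _ = K⁻¹ * S.normDw 0 n (wext ω) * ε := by ring
  -- conclude
  have hsub1 : T.tball n ω ⊆ Metric.ball (S.comp 0 n (wext ω) x) (K⁻¹ * S.normDw 0 n (wext ω) * ε) :=
    Metric.ball_subset_ball hradle
  have hsub2 := hgeom n ω hω x ε hballX
  refine hsub1.trans (hsub2.trans ?_)
  exact Set.image_mono (Metric.ball_subset_ball le_rfl |>.trans hballX)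
end
end

section
/- Assume Φ satisfies ESC (constant ᾱ) and UCC (constant θ), and that diam(X) ≤ 1. Let n < m be natural numbers with m ≥ θ^{-1}[log 2 + n(ᾱ + θ)]. Then for every τ ∈ I^m and every ω ∈ I^n, either φ_τ^m(X) ∩ (½B_ω) = ∅ or φ_τ^m(X) ⊆ B_ω, where ½B_ω denotes the ball with the same center as B_ω and half its radius. -/
open Set Metric MeasureTheory Filter

noncomputable section

section Aux

variable {d : ℕ} {E : Type} [DecidableEq E]

lemma NCIFS.Xne (S : NCIFS d E) : S.X.Nonempty :=
  S.intX.mono interior_subset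

lemma NCIFS.kmaxLv_bddAbove (S : NCIFS d E) (k : ℕ) :
    BddAbove {r | ∃ e ∈ S.I k, ∃ x ∈ S.X, r = S.D k e x} := by
  refine ⟨1, ?_⟩
  rintro r ⟨e, he, x, hx, rfl⟩
  exact (S.contractX k e he x hx).le

lemma NCIFS.D_le_kmaxLv (S : NCIFS d E) (k : ℕ) (e : E) (he : e ∈ S.I k)
    (x : Pt d) (hx : x ∈ S.X) : S.D k e x ≤ S.kmaxLv k :=
  le_csSup (S.kmaxLv_bddAbove k) ⟨e, he, x, hx, rfl⟩

lemma NCIFS.kmaxLv_pos (S : NCIFS d E) (k : ℕ) : 0 < S.kmaxLv k := by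
  obtain ⟨e, he⟩ := S.Ine k
  obtain ⟨x, hx⟩ := S.Xne
  exact lt_of_lt_of_le (S.Dpos k e he x (S.XsubV hx)) (S.D_le_kmaxLv k e he x hx)

lemma NCIFS.lip_lv (S : NCIFS d E) (k : ℕ) (e : E)
    (he : e ∈ S.I k) {x y : Pt d} (hx : x ∈ S.X) (hy : y ∈ S.X) :
    dist (S.φ k e x) (S.φ k e y) ≤ S.kmaxLv k * dist x y := by
  classical
  choose A hA hnorm using fun x hx => S.conformal k e he x hx
  set f' : Pt d → (Pt d →L[ℝ] Pt d) := fun x =>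
    if hx : x ∈ S.X then A x (S.XsubV hx) else 0 with hf'
  have hder : ∀ z ∈ S.X, HasFDerivWithinAt (S.φ k e) (f' z) S.X z := by
    intro z hz
    rw [hf']
    simp only [dif_pos hz]
    exact (hA z (S.XsubV hz)).hasFDerivWithinAt
  have hbound : ∀ z ∈ S.X, ‖f' z‖ ≤ S.kmaxLv k := by
    intro z hz
    rw [hf']
    simp only [dif_pos hz]
    refine ContinuousLinearMap.opNorm_le_bound _ (S.kmaxLv_pos k).le ?_
    intro v
    rw [hnorm z (S.XsubV hz) v]
    exact mul_le_mul_of_nonneg_right (S.D_le_kmaxLv k e he z hz) (norm_nonneg v)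
  have := S.convexX.norm_image_sub_le_of_norm_hasFDerivWithin_le hder hbound hy hx
  simpa [dist_eq_norm] using this

lemma NCIFS.comp_mapsX (S : NCIFS d E) (q : ℕ) : ∀ (k : ℕ) (ξ : ℕ → E),
    (∀ j < q, ξ j ∈ S.I (k + j)) → Set.MapsTo (S.comp k q ξ) S.X S.X := by
  induction q with
  | zero => intro k ξ _; exact Set.mapsTo_id _
  | succ q ih =>
    intro k ξ hξ
    have h0 : ξ 0 ∈ S.I k := by simpa using hξ 0 (Nat.succ_pos q)
    have htail : ∀ j < q, ξ (j + 1) ∈ S.I (k + 1 + j) := by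
      intro j hj
      have := hξ (j + 1) (by omega)
      convert this using 2
      omega
    exact (S.mapsX k (ξ 0) h0).comp (ih (k + 1) _ htail)

lemma NCIFS.comp_lip (S : NCIFS d E) (q : ℕ) :
    ∀ (k : ℕ) (ξ : ℕ → E), (∀ j < q, ξ j ∈ S.I (k + j)) →
    ∀ x ∈ S.X, ∀ y ∈ S.X,
      dist (S.comp k q ξ x) (S.comp k q ξ y) ≤
        (∏ j ∈ Finset.range q, S.kmaxLv (k + j)) * dist x y := by
  induction q with
  | zero => intro k ξ _ x hx y hy; simp [NCIFS.comp]
  | succ q ih =>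
    intro k ξ hξ x hx y hy
    have h0 : ξ 0 ∈ S.I k := by simpa using hξ 0 (Nat.succ_pos q)
    have htail : ∀ j < q, ξ (j + 1) ∈ S.I (k + 1 + j) := by
      intro j hj
      have := hξ (j + 1) (by omega)
      convert this using 2
      omega
    have hmX := S.comp_mapsX q (k + 1) (fun j => ξ (j + 1)) htail
    have h1 := S.lip_lv k (ξ 0) h0 (hmX hx) (hmX hy)
    have h2 := ih (k + 1) (fun j => ξ (j + 1)) htail x hx y hy
    have hP : ∏ j ∈ Finset.range (q + 1), S.kmaxLv (k + j)
        = S.kmaxLv k * ∏ j ∈ Finset.range q, S.kmaxLv (k + 1 + j) := by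
      rw [Finset.prod_range_succ', Nat.add_zero, mul_comm]
      congr 1
      refine Finset.prod_congr rfl fun j _ => ?_
      congr 1
      omega
    calc dist (S.comp k (q + 1) ξ x) (S.comp k (q + 1) ξ y)
        ≤ S.kmaxLv k * dist (S.comp (k + 1) q (fun j => ξ (j + 1)) x)
            (S.comp (k + 1) q (fun j => ξ (j + 1)) y) := h1
      _ ≤ S.kmaxLv k * ((∏ j ∈ Finset.range q, S.kmaxLv (k + 1 + j)) * dist x y) :=
          mul_le_mul_of_nonneg_left h2 (S.kmaxLv_pos k).le
      _ = (∏ j ∈ Finset.range (q + 1), S.kmaxLv (k + j)) * dist x y := by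
          rw [hP, mul_assoc]

end Aux
/-- Under ESC and UCC with `diam X ≤ 1`: if `n < m` and
`m ≥ θ⁻¹ (log 2 + n(ᾱ + θ))`, then for every `τ ∈ I^m` and `ω ∈ I^n`, either
`φ_τ^m(X)` misses the ball `½B_ω`, or `φ_τ^m(X) ⊆ B_ω`. -/
theorem image_dichotomy {d : ℕ} {E : Type} [DecidableEq E] [Nonempty E]
    (hd : 1 ≤ d) (S : NCIFS d E) (T : STData S)
    (al au θ : ℝ)
    (hESC : T.ESC al au) (hUCC : S.UCC θ)
    (hdiam : Metric.diam S.X ≤ 1)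
    (n m : ℕ) (hnm : n < m)
    (hm : θ⁻¹ * (Real.log 2 + (n : ℝ) * (au + θ)) ≤ (m : ℝ)) :
    ∀ τ ∈ S.words 0 m, ∀ ω ∈ S.words 0 n,
      S.comp 0 m (wext τ) '' S.X ∩
          Metric.ball (S.comp 0 n (wext ω) (T.xc n)) (T.radius ω / 2) = ∅ ∨
        S.comp 0 m (wext τ) '' S.X ⊆ T.tball n ω := by
  intro τ hτ ω hω
  rcases Set.eq_empty_or_nonempty (S.comp 0 m (wext τ) '' S.X ∩
      Metric.ball (S.comp 0 n (wext ω) (T.xc n)) (T.radius ω / 2)) with h | h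
  · exact Or.inl h
  right
  have hθ : 0 < θ := hUCC.1
  set P : ℕ → ℝ := fun q => ∏ j ∈ Finset.range q, S.kmaxLv j with hPdef
  have hPpos : ∀ q, 0 < P q := fun q =>
    Finset.prod_pos fun j _ => S.kmaxLv_pos j
  -- radius lower bound
  have hrad : Real.exp (-((n : ℝ) * au)) * P n ≤ T.radius ω := by
    have hS : T.Snβ n (wcat ω (T.ξt n)) ≤ (n : ℝ) * au - Real.log (P n) := by
      have hlogP : Real.log (P n) = ∑ k ∈ Finset.range n, Real.log (S.kmaxLv k) := by
        rw [hPdef]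
        exact Real.log_prod fun k _ => (S.kmaxLv_pos k).ne'
      rw [STData.Snβ, hlogP]
      have : ∀ k ∈ Finset.range n,
          T.β k (fun j => wcat ω (T.ξt n) (k + j)) ≤ au - Real.log (S.kmaxLv k) := by
        intro k hk
        have hkn : k < n := Finset.mem_range.mp hk
        have hmem : ∀ j, wcat ω (T.ξt n) (k + j) ∈ S.I (k + j) := by
          intro j
          unfold wcat
          by_cases hj : k + j < n
          · rw [dif_pos hj]
            have := (Fintype.mem_piFinset.mp hω) ⟨k + j, hj⟩
            simpa using this
          · rw [dif_neg hj]
            have := T.ξtmem n (k + j - n)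
            have h' : n + (k + j - n) = k + j := by omega
            rwa [h'] at this
        have hβ := (hESC.2.2 k _ hmem).2
        linarith
      calc ∑ k ∈ Finset.range n, T.β k (fun j => wcat ω (T.ξt n) (k + j))
          ≤ ∑ k ∈ Finset.range n, (au - Real.log (S.kmaxLv k)) :=
            Finset.sum_le_sum this
        _ = (n : ℝ) * au - ∑ k ∈ Finset.range n, Real.log (S.kmaxLv k) := by
            rw [Finset.sum_sub_distrib, Finset.sum_const, Finset.card_range,
              nsmul_eq_mul]
    rw [STData.radius]
    have := Real.exp_le_exp.mpr (neg_le_neg hS)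
    refine le_trans (le_of_eq ?_) this
    rw [neg_sub, sub_eq_add_neg, ← neg_neg ((n:ℝ)*au), Real.exp_add,
      Real.exp_log (hPpos n), neg_neg, mul_comm]
  -- contraction bound : P m ≤ radius / 2
  have hθm : Real.log 2 + (n : ℝ) * (au + θ) ≤ θ * m := by
    have := mul_le_mul_of_nonneg_left hm hθ.le
    rwa [← mul_assoc, mul_inv_cancel₀ hθ.ne', one_mul] at this
  have hPm : P m ≤ T.radius ω / 2 := by
    have hsplit : P m = P n * ∏ j ∈ Finset.Ico n m, S.kmaxLv j := by
      rw [hPdef]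
      simp only [Finset.range_eq_Ico]
      exact (Finset.prod_Ico_consecutive _ (Nat.zero_le n) hnm.le).symm
    have htail : ∏ j ∈ Finset.Ico n m, S.kmaxLv j ≤ Real.exp (-θ * ((m : ℝ) - n)) := by
      calc ∏ j ∈ Finset.Ico n m, S.kmaxLv j
          ≤ ∏ _j ∈ Finset.Ico n m, Real.exp (-θ) :=
            Finset.prod_le_prod (fun j _ => (S.kmaxLv_pos j).le) (fun j _ => hUCC.2 j)
        _ = Real.exp (-θ) ^ (m - n) := by
            rw [Finset.prod_const, Nat.card_Ico]
        _ = Real.exp (-θ * ((m : ℝ) - n)) := by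
            rw [← Real.exp_nat_mul]
            congr 1
            rw [Nat.cast_sub hnm.le]
            ring
    have hexp2 : Real.exp (-θ * ((m : ℝ) - n)) ≤ Real.exp (-((n : ℝ) * au)) / 2 := by
      have h1 : Real.exp (-θ * ((m : ℝ) - n))
          ≤ Real.exp (-(Real.log 2 + (n : ℝ) * au)) := by
        rw [Real.exp_le_exp]
        nlinarith
      have h2 : Real.exp (-(Real.log 2 + (n : ℝ) * au))
          = Real.exp (-((n : ℝ) * au)) / 2 := by
        rw [neg_add, Real.exp_add, Real.exp_neg, Real.exp_log two_pos]
        ring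
      rwa [h2] at h1
    calc P m = P n * ∏ j ∈ Finset.Ico n m, S.kmaxLv j := hsplit
      _ ≤ P n * (Real.exp (-((n : ℝ) * au)) / 2) := by
          refine mul_le_mul_of_nonneg_left (htail.trans hexp2) (hPpos n).le
      _ = (Real.exp (-((n : ℝ) * au)) * P n) / 2 := by ring
      _ ≤ T.radius ω / 2 := by linarith
  -- assembly
  obtain ⟨y, ⟨x₀, hx₀, rfl⟩, hy2⟩ := h
  rintro z ⟨x, hx, rfl⟩
  rw [Metric.mem_ball] at hy2
  simp only [STData.tball, Metric.mem_ball]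
  have hτmem : ∀ j < m, wext τ j ∈ S.I (0 + j) := by
    intro j hj
    unfold wext
    rw [dif_pos hj]
    exact (Fintype.mem_piFinset.mp hτ) ⟨j, hj⟩
  have hlip := S.comp_lip m 0 (wext τ) hτmem x hx x₀ hx₀
  have hPeq : ∏ j ∈ Finset.range m, S.kmaxLv (0 + j) = P m := by
    rw [hPdef]; simp
  rw [hPeq] at hlip
  have hdxx : dist x x₀ ≤ 1 :=
    (Metric.dist_le_diam_of_mem S.compactX.isBounded hx hx₀).trans hdiam
  have hsmall : dist (S.comp 0 m (wext τ) x) (S.comp 0 m (wext τ) x₀) ≤ P m := by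
    calc dist (S.comp 0 m (wext τ) x) (S.comp 0 m (wext τ) x₀)
        ≤ P m * dist x x₀ := hlip
      _ ≤ P m * 1 := mul_le_mul_of_nonneg_left hdxx (hPpos m).le
      _ = P m := mul_one _
  calc dist (S.comp 0 m (wext τ) x) (S.comp 0 n (wext ω) (T.xc n))
      ≤ dist (S.comp 0 m (wext τ) x) (S.comp 0 m (wext τ) x₀)
        + dist (S.comp 0 m (wext τ) x₀) (S.comp 0 n (wext ω) (T.xc n)) :=
        dist_triangle _ _ _
    _ < T.radius ω / 2 + T.radius ω / 2 := by
        have := hsmall.trans hPm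
        linarith
    _ = T.radius ω := by ring
end
end

section
/- Suppose the unperturbed affine system Φ has the strong separation condition (g_{(n)} > 0 for all n). If 0 < ε_n < g_{(n)}/(2κ̄_{(n)}) for all n, then the perturbed system Φ̃ also has the strong separation condition; that is, for every n, all distinct i, j ∈ I^{(n)}, and all x, y ∈ [0,1], |φ̃_j^{(n)}(x) − φ̃_i^{(n)}(y)| > 0. -/
open Set Metric MeasureTheory Filter

noncomputable section

/-- A nonautonomous IFS of affine contractions `x ↦ s x + c` on `[0,1]`. -/
structure AffIFS (E : Type) [DecidableEq E] : Type where
  I : ℕ → Finset E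
  Ine : ∀ n, (I n).Nonempty
  s : ℕ → E → ℝ
  c : ℕ → E → ℝ
  sne : ∀ n e, e ∈ I n → s n e ≠ 0
  contra : ∀ n e, e ∈ I n → |s n e| < 1
  maps : ∀ n e, e ∈ I n → Set.MapsTo (fun x => s n e * x + c n e) (Set.Icc 0 1) (Set.Icc 0 1)

namespace AffIFS

variable {E : Type} [DecidableEq E]

/-- The affine map `φ_e^{(n)}`. -/
def φ (A : AffIFS E) (n : ℕ) (e : E) (x : ℝ) : ℝ := A.s n e * x + A.c n e

/-- `κ̄_{(n)} = max_{e ∈ I^{(n)}} |(φ_e^{(n)})'|`. -/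
def kmaxLv (A : AffIFS E) (n : ℕ) : ℝ := sSup {r | ∃ e ∈ A.I n, r = |A.s n e|}

/-- The smallest gap `g_{(n)}` between images of distinct level-`n` maps. -/
def gap (A : AffIFS E) (n : ℕ) : ℝ :=
  sInf {r | ∃ i ∈ A.I n, ∃ j ∈ A.I n, i ≠ j ∧
    ∃ x ∈ Set.Icc (0 : ℝ) 1, ∃ y ∈ Set.Icc (0 : ℝ) 1, r = |A.φ n j x - A.φ n i y|}

end AffIFS

/-- Nonlinear perturbation data for an affine nonautonomous IFS on `[0,1]`:
points `u_e^{(n)} ∈ [0,1]` and Hölder-continuous functions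
`γ_e^{(n)} : [0,1] → (−ε_n, ε_n)` with `ε_n ∈ (0,1)`. -/
structure Pert {E : Type} [DecidableEq E] (A : AffIFS E) : Type where
  u : ℕ → E → ℝ
  umem : ∀ n e, u n e ∈ Set.Icc (0 : ℝ) 1
  γ : ℕ → E → ℝ → ℝ
  ε : ℕ → ℝ
  εmem : ∀ n, ε n ∈ Set.Ioo (0 : ℝ) 1
  γbound : ∀ n e, e ∈ A.I n → ∀ x ∈ Set.Icc (0 : ℝ) 1, |γ n e x| < ε n
  γholder : ∀ n e, e ∈ A.I n → ∃ C r : NNReal, 0 < r ∧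
    HolderOnWith C r (γ n e) (Set.Icc 0 1)

namespace Pert

variable {E : Type} [DecidableEq E] {A : AffIFS E}

/-- The perturbed map
`φ̃_e^{(n)}(x) = φ_e^{(n)}(u_e^{(n)}) + (φ_e^{(n)})' ∫_{u_e^{(n)}}^x (1 + γ_e^{(n)}(t)) dt`. -/
def pmap (P : Pert A) (n : ℕ) (e : E) (x : ℝ) : ℝ :=
  A.φ n e (P.u n e) + A.s n e * ∫ t in (P.u n e)..x, (1 + P.γ n e t)

/-- `γ̄^{(n)} = max_{e ∈ I^{(n)}} sup_{x ∈ [0,1]} |γ_e^{(n)}(x)|`. -/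
def gbar (P : Pert A) (n : ℕ) : ℝ :=
  sSup {r | ∃ e ∈ A.I n, ∃ x ∈ Set.Icc (0 : ℝ) 1, r = |P.γ n e x|}

end Pert

/-- A general nonautonomous system of maps on `[0,1] ⊆ ℝ`, recorded together with the
modulus `Df` of the derivative of each map. -/
structure Sys1 (E : Type) [DecidableEq E] : Type where
  I : ℕ → Finset E
  f : ℕ → E → ℝ → ℝ
  Df : ℕ → E → ℝ → ℝ

namespace Sys1

variable {E : Type} [DecidableEq E]

/-- The finite words occupying levels `m, m+1, …, m+q-1`. -/
def words (G : Sys1 E) (m q : ℕ) : Finset (Fin q → E) :=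
  Fintype.piFinset fun k => G.I (m + (k : ℕ))

/-- The composition `f_{ξ 0}^{(m)} ∘ ⋯ ∘ f_{ξ (q-1)}^{(m+q-1)}`. -/
def comp (G : Sys1 E) : ℕ → ℕ → (ℕ → E) → ℝ → ℝ
  | _, 0, _ => id
  | m, q + 1, ξ => G.f m (ξ 0) ∘ G.comp (m + 1) q (fun j => ξ (j + 1))

/-- `|(f_ξ^{(m,…,m+q-1)})'(x)|` via the chain rule. -/
def Dw (G : Sys1 E) : ℕ → ℕ → (ℕ → E) → ℝ → ℝ
  | _, 0, _, _ => 1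
  | m, q + 1, ξ, x =>
      |G.Df m (ξ 0) (G.comp (m + 1) q (fun j => ξ (j + 1)) x)| *
        G.Dw (m + 1) q (fun j => ξ (j + 1)) x

/-- `κ̲_{(n)}`. -/
def kminLv (G : Sys1 E) (n : ℕ) : ℝ :=
  sInf {r | ∃ e ∈ G.I n, ∃ x ∈ Set.Icc (0 : ℝ) 1, r = |G.Df n e x|}

/-- `κ̄_{(n)}`. -/
def kmaxLv (G : Sys1 E) (n : ℕ) : ℝ :=
  sSup {r | ∃ e ∈ G.I n, ∃ x ∈ Set.Icc (0 : ℝ) 1, r = |G.Df n e x|}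

/-- `κ̲_n`. -/
def kmin [Nonempty E] (G : Sys1 E) (n : ℕ) : ℝ :=
  sInf {r | ∃ ω ∈ G.words 0 n, ∃ x ∈ Set.Icc (0 : ℝ) 1, r = G.Dw 0 n (wext ω) x}

/-- `κ̄_n`. -/
def kmax [Nonempty E] (G : Sys1 E) (n : ℕ) : ℝ :=
  sSup {r | ∃ ω ∈ G.words 0 n, ∃ x ∈ Set.Icc (0 : ℝ) 1, r = G.Dw 0 n (wext ω) x}

/-- The limit set `J = ⋂_{n ≥ 1} ⋃_{ω ∈ I^n} f_ω^n([0,1])`. -/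
def limitSet [Nonempty E] (G : Sys1 E) : Set ℝ :=
  ⋂ n ∈ Set.Ici 1, ⋃ ω ∈ G.words 0 n, G.comp 0 n (wext ω) '' Set.Icc 0 1

/-- `J_n`, the image of the level-`(n+1)`-onwards coding map. -/
def Jlv (G : Sys1 E) (n : ℕ) : Set ℝ :=
  {x | ∃ ξ : ℕ → E, (∀ j, ξ j ∈ G.I (n + j)) ∧ ∀ k, x ∈ G.comp n k ξ '' Set.Icc 0 1}

/-- Open set condition. -/
def OSC (G : Sys1 E) : Prop :=
  ∀ n, ∀ i ∈ G.I n, ∀ j ∈ G.I n, i ≠ j →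
    G.f n i '' interior (Set.Icc 0 1) ∩ G.f n j '' interior (Set.Icc 0 1) = ∅

/-- Uniformly contracting condition with constant `θ`. -/
def UCC (G : Sys1 E) (θ : ℝ) : Prop :=
  0 < θ ∧ ∀ n, G.kmaxLv n ≤ Real.exp (-θ)

/-- `X_ε = [0,1] \ B(ℝ \ [0,1], ε)`. -/
def Xeps (ε : ℝ) : Set ℝ :=
  Set.Icc 0 1 \ ⋃ y ∈ (Set.Icc (0 : ℝ) 1)ᶜ, Metric.ball y ε

/-- Non-empty quasi middle condition with constant `ε`. -/
def NEQ (G : Sys1 E) (ε : ℝ) : Prop :=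
  0 < ε ∧ ∀ n, (G.Jlv n ∩ Xeps ε).Nonempty

end Sys1

/-- The Birkhoff-type sum `S_nβ(ξ) = Σ_{k<n} β_k(σ^k ξ)`. -/
def Snb {E : Type} (β : ℕ → (ℕ → E) → ℝ) (n : ℕ) (ξ : ℕ → E) : ℝ :=
  ∑ k ∈ Finset.range n, β k (fun j => ξ (k + j))

/-- Exponentially shrinking condition for `β` with constants `al ≤ au`. -/
def ESC1 {E : Type} [DecidableEq E] (G : Sys1 E) (β : ℕ → (ℕ → E) → ℝ)
    (al au : ℝ) : Prop :=
  0 < al ∧ al ≤ au ∧ ∀ k, ∀ ξ : ℕ → E, (∀ j, ξ j ∈ G.I (k + j)) →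
    al ≤ β k ξ + Real.log (G.kminLv k) ∧ β k ξ + Real.log (G.kmaxLv k) ≤ au

/-- Linear variation condition for `β`. -/
def LVC1 {E : Type} [DecidableEq E] (G : Sys1 E) (β : ℕ → (ℕ → E) → ℝ) : Prop :=
  Filter.Tendsto (fun n : ℕ =>
    (1 / (n : ℝ)) *
      (sSup {r | ∃ ξ : ℕ → E, (∀ j, ξ j ∈ G.I j) ∧ r = Snb β n ξ} -
        sInf {r | ∃ ξ : ℕ → E, (∀ j, ξ j ∈ G.I j) ∧ r = Snb β n ξ}))
    Filter.atTop (nhds 0)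

/-- The upper pressure `P̄_β(t)`. -/
def upperP1 {E : Type} [DecidableEq E] [Nonempty E] (G : Sys1 E)
    (β : ℕ → (ℕ → E) → ℝ) (ξt : ℕ → ℕ → E) (t : ℝ) : ℝ :=
  Filter.limsup (fun n : ℕ =>
    (1 / (n : ℝ)) *
      Real.log (∑ ω ∈ G.words 0 n, Real.exp (-t * Snb β n (wcat ω (ξt n)))))
    Filter.atTop

/-- The lower pressure `P̲_β(t)`. -/
def lowerP1 {E : Type} [DecidableEq E] [Nonempty E] (G : Sys1 E)
    (β : ℕ → (ℕ → E) → ℝ) (ξt : ℕ → ℕ → E) (t : ℝ) : ℝ :=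
  Filter.liminf (fun n : ℕ =>
    (1 / (n : ℝ)) *
      Real.log (∑ ω ∈ G.words 0 n, Real.exp (-t * Snb β n (wcat ω (ξt n)))))
    Filter.atTop

/-- The Bowen parameter `b = inf {t ≥ 0 : P̄_β(t) < 0}`. -/
def bowen1 {E : Type} [DecidableEq E] [Nonempty E] (G : Sys1 E)
    (β : ℕ → (ℕ → E) → ℝ) (ξt : ℕ → ℕ → E) : ℝ :=
  sInf {t : ℝ | 0 ≤ t ∧ upperP1 G β ξt t < 0}

/-- The (topological) support of a measure on `ℝ`. -/
def msupp1 (μ : Measure ℝ) : Set ℝ :=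
  {x | ∀ r : ℝ, 0 < r → 0 < μ (Metric.ball x r)}

/-- `μ` is `h`-Ahlfors regular with constant `C`. -/
def Ahlfors1 (μ : Measure ℝ) (h C : ℝ) : Prop :=
  1 ≤ C ∧ ∀ x ∈ msupp1 μ, ∀ r : ℝ, 0 < r → r ≤ 1 →
    ENNReal.ofReal (C⁻¹ * r ^ h) ≤ μ (Metric.ball x r) ∧
      μ (Metric.ball x r) ≤ ENNReal.ofReal (C * r ^ h)

/-- The nonautonomous system associated to an affine IFS (with `|(φ_e^{(n)})'| = |s|`). -/
def AffIFS.toSys {E : Type} [DecidableEq E] (A : AffIFS E) : Sys1 E :=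
  ⟨A.I, A.φ, fun n e _ => A.s n e⟩

/-- The nonautonomous system associated to a perturbation (with
`(φ̃_e^{(n)})'(x) = (φ_e^{(n)})' (1 + γ_e^{(n)}(x))`). -/
def Pert.toSys {E : Type} [DecidableEq E] {A : AffIFS E} (P : Pert A) : Sys1 E :=
  ⟨A.I, P.pmap, fun n e x => A.s n e * (1 + P.γ n e x)⟩

/-- The hypotheses of the bounded-ratio Bowen-formula theorem (Theorem
`bowen_formula_bounded_ratio`, specialized to dimension 1): OSC, ESC, UCC, LVC and NEQ,
boundedness of `(κ̄_n/κ̲_n)`, and the existence of an `h`-Ahlfors measure with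
`h = HD(J)` supported exactly on the limit set `J`. -/
def BddRatioHyp {E : Type} [DecidableEq E] [Nonempty E] (G : Sys1 E)
    (β : ℕ → (ℕ → E) → ℝ) : Prop :=
  G.OSC ∧ (∃ al au, ESC1 G β al au) ∧ (∃ θ, G.UCC θ) ∧ LVC1 G β ∧ (∃ ε, G.NEQ ε) ∧
    (∃ M : ℝ, ∀ n, G.kmax n / G.kmin n ≤ M) ∧
    ∃ (h C : ℝ) (μ : Measure ℝ), 0 ≤ h ∧ ENNReal.ofReal h = dimH G.limitSet ∧
      Ahlfors1 μ h C ∧ msupp1 μ = G.limitSet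

/-- The hypotheses of the subexponential-ratio Bowen-formula theorem (Theorem
`bowen_formula_subexponential_ratio`, specialized to dimension 1): OSC, ESC, UCC and NEQ,
`(1/n) log (κ̄_n/κ̲_n) → 0`, the existence of an `h`-Ahlfors measure with `h = HD(J)`
supported exactly on the limit set `J`, and the agreement of the upper and lower
pressures on a neighborhood of the Bowen parameter. -/
def SubexpHyp {E : Type} [DecidableEq E] [Nonempty E] (G : Sys1 E)
    (β : ℕ → (ℕ → E) → ℝ) (ξt : ℕ → ℕ → E) : Prop :=
  G.OSC ∧ (∃ al au, ESC1 G β al au) ∧ (∃ θ, G.UCC θ) ∧ (∃ ε, G.NEQ ε) ∧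
    Filter.Tendsto (fun n : ℕ => (1 / (n : ℝ)) * Real.log (G.kmax n / G.kmin n))
      Filter.atTop (nhds 0) ∧
    (∃ (h C : ℝ) (μ : Measure ℝ), 0 ≤ h ∧ ENNReal.ofReal h = dimH G.limitSet ∧
      Ahlfors1 μ h C ∧ msupp1 μ = G.limitSet) ∧
    ∃ δ : ℝ, 0 < δ ∧ ∀ t : ℝ, |t - bowen1 G β ξt| < δ →
      upperP1 G β ξt t = lowerP1 G β ξt t

theorem pmap_close {E : Type} [DecidableEq E] {A : AffIFS E} (P : Pert A)
    (n : ℕ) (e : E) (he : e ∈ A.I n) (x : ℝ) (hx : x ∈ Set.Icc (0 : ℝ) 1) :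
    |P.pmap n e x - A.φ n e x| ≤ |A.s n e| * P.ε n := by
  have hu := P.umem n e
  have hsub : Set.uIcc (P.u n e) x ⊆ Set.Icc (0 : ℝ) 1 := Set.uIcc_subset_Icc hu hx
  obtain ⟨C, r, hr, hH⟩ := P.γholder n e he
  have hcont : ContinuousOn (P.γ n e) (Set.Icc 0 1) := hH.continuousOn hr
  have hint : IntervalIntegrable (P.γ n e) volume (P.u n e) x :=
    (hcont.mono hsub).intervalIntegrable
  have hbound : |∫ t in (P.u n e)..x, P.γ n e t| ≤ P.ε n * |x - P.u n e| := by
    rw [← Real.norm_eq_abs]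
    apply intervalIntegral.norm_integral_le_of_norm_le_const
    intro t ht
    have : t ∈ Set.Icc (0 : ℝ) 1 := hsub (Set.uIoc_subset_uIcc ht)
    rw [Real.norm_eq_abs]
    exact (P.γbound n e he t this).le
  have hxu : |x - P.u n e| ≤ 1 := by
    rw [abs_le]
    constructor <;> [linarith [hx.1, hu.2]; linarith [hx.2, hu.1]]
  have hε0 : 0 ≤ P.ε n := (P.εmem n).1.le
  have key : P.pmap n e x - A.φ n e x = A.s n e * ∫ t in (P.u n e)..x, P.γ n e t := by
    unfold Pert.pmap AffIFS.φ
    rw [intervalIntegral.integral_add intervalIntegrable_const hint,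
      intervalIntegral.integral_const]
    simp only [smul_eq_mul]
    ring
  rw [key, abs_mul]
  calc |A.s n e| * |∫ t in (P.u n e)..x, P.γ n e t|
      ≤ |A.s n e| * (P.ε n * |x - P.u n e|) := by
        exact mul_le_mul_of_nonneg_left hbound (abs_nonneg _)
    _ ≤ |A.s n e| * (P.ε n * 1) :=
        mul_le_mul_of_nonneg_left (mul_le_mul_of_nonneg_left hxu hε0) (abs_nonneg _)
    _ = |A.s n e| * P.ε n := by ring

theorem abs_s_le_kmaxLv {E : Type} [DecidableEq E] (A : AffIFS E)
    (n : ℕ) (e : E) (he : e ∈ A.I n) : |A.s n e| ≤ A.kmaxLv n := by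
  apply le_csSup
  · have : {r | ∃ e ∈ A.I n, r = |A.s n e|} = (fun e => |A.s n e|) '' ↑(A.I n) := by
      ext r; simp [eq_comm]
    rw [this]
    exact (A.I n).finite_toSet.image _ |>.bddAbove
  · exact ⟨e, he, rfl⟩

/-- If the affine system `Φ` has the strong separation condition
(`g_{(n)} > 0` for all `n`) and `0 < ε_n < g_{(n)}/(2κ̄_{(n)})` for all `n`, then the
perturbed system `Φ̃` also has the strong separation condition. -/
theorem perturbed_strong_separation {E : Type} [DecidableEq E]
    (A : AffIFS E) (P : Pert A)
    (hsep : ∀ n, 0 < A.gap n)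
    (hε : ∀ n, P.ε n < A.gap n / (2 * A.kmaxLv n)) :
    ∀ n, ∀ i ∈ A.I n, ∀ j ∈ A.I n, i ≠ j →
      ∀ x ∈ Set.Icc (0 : ℝ) 1, ∀ y ∈ Set.Icc (0 : ℝ) 1,
        0 < |P.pmap n j x - P.pmap n i y| := by
  intro n i hi j hj hij x hx y hy
  have hκj := abs_s_le_kmaxLv A n j hj
  have hκi := abs_s_le_kmaxLv A n i hi
  have hκpos : 0 < A.kmaxLv n := by
    obtain ⟨e, he⟩ := A.Ine n
    exact lt_of_lt_of_le (abs_pos.mpr (A.sne n e he)) (abs_s_le_kmaxLv A n e he)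
  have hε0 : 0 ≤ P.ε n := (P.εmem n).1.le
  have hgap : A.gap n ≤ |A.φ n j x - A.φ n i y| := by
    apply csInf_le
    · exact ⟨0, fun r ⟨i', _, j', _, _, x', _, y', _, hr⟩ => hr ▸ abs_nonneg _⟩
    · exact ⟨i, hi, j, hj, hij, x, hx, y, hy, rfl⟩
  have hεgap : 2 * A.kmaxLv n * P.ε n < A.gap n := by
    have := hε n
    have h2κ : 0 < 2 * A.kmaxLv n := by linarith
    calc 2 * A.kmaxLv n * P.ε n < 2 * A.kmaxLv n * (A.gap n / (2 * A.kmaxLv n)) :=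
          mul_lt_mul_of_pos_left this h2κ
      _ = A.gap n := by field_simp
  have hj' := pmap_close P n j hj x hx
  have hi' := pmap_close P n i hi y hy
  have hjb : |P.pmap n j x - A.φ n j x| ≤ A.kmaxLv n * P.ε n :=
    hj'.trans (mul_le_mul_of_nonneg_right hκj hε0)
  have hib : |P.pmap n i y - A.φ n i y| ≤ A.kmaxLv n * P.ε n :=
    hi'.trans (mul_le_mul_of_nonneg_right hκi hε0)
  have htri : |A.φ n j x - A.φ n i y| ≤
      |P.pmap n j x - P.pmap n i y| + |P.pmap n j x - A.φ n j x|
        + |P.pmap n i y - A.φ n i y| := by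
    have h1 : A.φ n j x - A.φ n i y =
        (P.pmap n j x - P.pmap n i y) - (P.pmap n j x - A.φ n j x)
          + (P.pmap n i y - A.φ n i y) := by ring
    calc |A.φ n j x - A.φ n i y| ≤
        |(P.pmap n j x - P.pmap n i y) - (P.pmap n j x - A.φ n j x)|
          + |P.pmap n i y - A.φ n i y| := by rw [h1]; exact abs_add_le _ _
      _ ≤ |P.pmap n j x - P.pmap n i y| + |P.pmap n j x - A.φ n j x|
          + |P.pmap n i y - A.φ n i y| := by
            have := abs_sub (P.pmap n j x - P.pmap n i y) (P.pmap n j x - A.φ n j x)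
            linarith
  linarith
end
end
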